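/- Let α ∈ (0,1), n ≥ 1, and define f(x) = inf over r ∈ ℝ of (r + (1/(nα)) Σᵢ (xᵢ - r)⁺) for x ∈ ℝⁿ. Then for all x, y ∈ ℝⁿ, f(x) - f(y) ≤ (1/(nα)) Σᵢ (xᵢ - yᵢ)⁺. -/

import Mathlib

/-- Empirical CVaR functional at level `α` for a sample `x : Fin n → ℝ`. -/
noncomputable def ecvar (n : ℕ) (α : ℝ) (x : Fin n → ℝ) : ℝ :=
  ⨅ r : ℝ, (r + (1 / (n * α)) * ∑ i, max (x i - r) 0)

lemma ecvar_bdd (n : ℕ) (hn : 1 ≤ n) (α : ℝ) (hα0 : 0 < α) (hα1 : α < 1)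
    (x : Fin n → ℝ) :
    BddBelow (Set.range fun r : ℝ => r + (1 / (n * α)) * ∑ i, max (x i - r) 0) := by
  have hne : (Finset.univ : Finset (Fin n)).Nonempty := ⟨⟨0, hn⟩, Finset.mem_univ _⟩
  set m := Finset.univ.inf' hne x with hm
  have hc : (0 : ℝ) < 1 / (n * α) := by
    apply div_pos one_pos
    positivity
  refine ⟨m, ?_⟩
  rintro _ ⟨r, rfl⟩
  rcases le_total m r with h | h
  · have hsum : (0 : ℝ) ≤ ∑ i, max (x i - r) 0 :=
      Finset.sum_nonneg fun i _ => le_max_right _ _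
    nlinarith
  · have hterm : ∀ i ∈ Finset.univ, m - r ≤ max (x i - r) 0 := by
      intro i _
      have : m ≤ x i := Finset.inf'_le _ (Finset.mem_univ i)
      have : m - r ≤ x i - r := by linarith
      exact this.trans (le_max_left _ _)
    have hsum : (n : ℝ) * (m - r) ≤ ∑ i, max (x i - r) 0 := by
      calc (n : ℝ) * (m - r) = ∑ _i : Fin n, (m - r) := by
            simp [Finset.sum_const, mul_comm]
            ring
        _ ≤ ∑ i, max (x i - r) 0 := Finset.sum_le_sum hterm
    have hn' : (1 : ℝ) ≤ n := by exact_mod_cast hn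
    have hkey : (1 : ℝ) < (n : ℝ) * α * (1 / (n * α)) * (1 / α) := by
      rw [mul_one_div_cancel (by positivity)]
      rw [one_mul]
      exact one_lt_one_div hα0 hα1
    have h1 : (n : ℝ) * (1 / (n * α)) = 1 / α := by
      field_simp
    have : r + 1 / (↑n * α) * ((n : ℝ) * (m - r)) ≤
        r + 1 / (↑n * α) * ∑ i, max (x i - r) 0 := by
      gcongr
    refine le_trans ?_ this
    have heq : 1 / ((n:ℝ) * α) * ((n:ℝ) * (m - r)) = 1 / α * (m - r) := by
      field_simp
    rw [heq]
    have h2 : (1 : ℝ) < 1 / α := one_lt_one_div hα0 hα1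
    nlinarith

theorem ecvar_sub_le (α : ℝ) (hα : α ∈ Set.Ioo (0 : ℝ) 1) (n : ℕ) (hn : 1 ≤ n)
    (x y : Fin n → ℝ) :
    ecvar n α x - ecvar n α y ≤ (1 / (n * α)) * ∑ i, max (x i - y i) 0 := by
  obtain ⟨hα0, hα1⟩ := hα
  set K := (1 / ((n : ℝ) * α)) * ∑ i, max (x i - y i) 0 with hK
  have hc : (0 : ℝ) ≤ 1 / (n * α) := by positivity
  have hbx := ecvar_bdd n hn α hα0 hα1 x
  have hby := ecvar_bdd n hn α hα0 hα1 y
  rw [sub_le_iff_le_add, add_comm]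
  have hadd : ecvar n α y + K
      = ⨅ r : ℝ, ((r + (1 / (n * α)) * ∑ i, max (y i - r) 0) + K) := by
    rw [ecvar, ciInf_add hby]
  rw [hadd, ecvar]
  apply ciInf_mono hbx
  intro r
  have hpt : ∀ i ∈ Finset.univ,
      max (x i - r) 0 ≤ max (y i - r) 0 + max (x i - y i) 0 := by
    intro i _
    rcases le_total (x i - r) 0 with h | h
    · have := le_max_right (y i - r) 0
      have := le_max_right (x i - y i) 0
      simp [max_eq_right h]
      positivity
    · rw [max_eq_left h]
      have : x i - r = (y i - r) + (x i - y i) := by ring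
      rw [this]
      exact add_le_add (le_max_left _ _) (le_max_left _ _)
  have hsum : ∑ i, max (x i - r) 0
      ≤ ∑ i, max (y i - r) 0 + ∑ i, max (x i - y i) 0 := by
    rw [← Finset.sum_add_distrib]
    exact Finset.sum_le_sum hpt
  calc r + 1 / (↑n * α) * ∑ i, max (x i - r) 0
      ≤ r + 1 / (↑n * α) * (∑ i, max (y i - r) 0 + ∑ i, max (x i - y i) 0) := by gcongr
    _ = (r + 1 / (↑n * α) * ∑ i, max (y i - r) 0) + K := by rw [hK]; ring
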